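/- arXiv:2506.19562 — 2 statements merged into one kernel-verified Lean document; each statement's English description precedes it below -/
import Mathlib

section
/- Let γ₁, γ₂ : [0,∞) → ℍ be two continuous curves landing at ∞ such that arg(γ₁(t)) → θ and arg(γ₂(t)) → θ as t → ∞, for the same θ ∈ (−π/2, π/2). Let {z_n} ⊂ ℍ be a sequence with |z_n| → ∞, and for each n let π_n¹ be a projection of z_n onto γ₁ and π_n² a projection of z_n onto γ₂. Then d_ℍ(π_n¹, π_n²) → 0 as n → ∞. -/
open Complex Filter Topology

/-- Pseudo-hyperbolic distance on the right half-plane ℍ = {Re z > 0}. -/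
noncomputable def rhoH (z w : ℂ) : ℝ := ‖(z - w) / (z + (starRingEnd ℂ) w)‖

/-- Hyperbolic distance on the right half-plane. -/
noncomputable def dH (z w : ℂ) : ℝ := (1/2) * Real.log ((1 + rhoH z w) / (1 - rhoH z w))

/-- `p` is a hyperbolic projection of `z` onto the curve `γ : [0,∞) → ℍ`. -/
def IsProjH (γ : ℝ → ℂ) (z p : ℂ) : Prop :=
  (∃ t ≥ (0:ℝ), p = γ t) ∧ ∀ t ≥ (0:ℝ), dH z p ≤ dH z (γ t)

/-- `f` is a hyperbolic holomorphic self-map of the right half-plane with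
Denjoy–Wolff point ∞: it preserves ℍ, is holomorphic on ℍ, its iterates tend to ∞
uniformly on compact subsets of ℍ, and `f(z)/z → c` for some `c > 1` as `z → ∞`
within every sector `{|arg z| < φ}`, `φ ∈ (0, π/2)`. -/
def HyperbolicAtInf (f : ℂ → ℂ) : Prop :=
  (∀ z : ℂ, 0 < z.re → 0 < (f z).re) ∧
  DifferentiableOn ℂ f {z : ℂ | 0 < z.re} ∧
  (∀ K : Set ℂ, K ⊆ {z : ℂ | 0 < z.re} → IsCompact K →
    ∀ M : ℝ, ∃ N : ℕ, ∀ n ≥ N, ∀ z ∈ K, M < ‖f^[n] z‖) ∧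
  (∃ c : ℝ, 1 < c ∧ ∀ φ ∈ Set.Ioo (0:ℝ) (Real.pi/2), ∀ ε > (0:ℝ), ∃ R : ℝ,
    ∀ z : ℂ, 0 < z.re → |z.arg| < φ → R < ‖z‖ →
      ‖f z / z - (c:ℂ)‖ < ε)

lemma rhoH_eq (z w : ℂ) :
    rhoH z w = ‖z - w‖ / ‖z + (starRingEnd ℂ) w‖ := by
  simp [rhoH, norm_div]

lemma normSq_add_conj (z w : ℂ) :
    Complex.normSq (z + (starRingEnd ℂ) w)
      = Complex.normSq (z - w) + 4 * z.re * w.re := by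
  simp [Complex.normSq_apply, Complex.add_re, Complex.add_im, Complex.sub_re, Complex.sub_im,
    Complex.conj_re, Complex.conj_im]
  ring

lemma abs_add_conj_pos {z w : ℂ} (hz : 0 < z.re) (hw : 0 < w.re) :
    0 < ‖z + (starRingEnd ℂ) w‖ := by
  rw [norm_pos_iff]
  intro h
  have : (z + (starRingEnd ℂ) w).re = 0 := by rw [h]; simp
  simp [Complex.add_re, Complex.conj_re] at this
  linarith

lemma rhoH_lt_one {z w : ℂ} (hz : 0 < z.re) (hw : 0 < w.re) : rhoH z w < 1 := by
  rw [rhoH_eq, div_lt_one (abs_add_conj_pos hz hw)]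
  have h := normSq_add_conj z w
  have h1 : Complex.normSq (z - w) < Complex.normSq (z + (starRingEnd ℂ) w) := by
    nlinarith [mul_pos hz hw]
  rw [Complex.norm_def, Complex.norm_def]
  exact Real.sqrt_lt_sqrt (Complex.normSq_nonneg _) h1

lemma rhoH_nonneg (z w : ℂ) : 0 ≤ rhoH z w := norm_nonneg _

lemma rho_le_of_dH_le {z p w : ℂ} (hp : rhoH z p < 1) (hw : rhoH z w < 1)
    (h : dH z p ≤ dH z w) : rhoH z p ≤ rhoH z w := by
  set a := rhoH z p with ha
  set b := rhoH z w with hb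
  have ha0 : 0 ≤ a := rhoH_nonneg z p
  have hb0 : 0 ≤ b := rhoH_nonneg z w
  have h1 : (0:ℝ) < (1 + a) / (1 - a) := div_pos (by linarith) (by linarith)
  have h2 : (0:ℝ) < (1 + b) / (1 - b) := div_pos (by linarith) (by linarith)
  have hlog : Real.log ((1 + a) / (1 - a)) ≤ Real.log ((1 + b) / (1 - b)) := by
    have := h; unfold dH at this; linarith
  have hq : (1 + a) / (1 - a) ≤ (1 + b) / (1 - b) :=
    (Real.log_le_log_iff h1 h2).mp hlog
  rw [div_le_div_iff₀ (by linarith) (by linarith)] at hq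
  nlinarith

lemma u_comp {z p w : ℂ} (hz : 0 < z.re) (hp : 0 < p.re) (hw : 0 < w.re)
    (hρ : rhoH z p ≤ rhoH z w) :
    w.re * Complex.normSq (z + (starRingEnd ℂ) p)
      ≤ p.re * Complex.normSq (z + (starRingEnd ℂ) w) := by
  rw [rhoH_eq, rhoH_eq] at hρ
  have dp := abs_add_conj_pos hz hp
  have dw := abs_add_conj_pos hz hw
  rw [div_le_div_iff₀ dp dw] at hρ
  have hsq : ‖z - p‖ * ‖z + (starRingEnd ℂ) w‖
      * (‖z - p‖ * ‖z + (starRingEnd ℂ) w‖)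
      ≤ ‖z - w‖ * ‖z + (starRingEnd ℂ) p‖
      * (‖z - w‖ * ‖z + (starRingEnd ℂ) p‖) :=
    mul_self_le_mul_self (by positivity) hρ
  have e1 : ‖z - p‖ * ‖z + (starRingEnd ℂ) w‖
      * (‖z - p‖ * ‖z + (starRingEnd ℂ) w‖)
      = Complex.normSq (z - p) * Complex.normSq (z + (starRingEnd ℂ) w) := by
    rw [← Complex.sq_norm, ← Complex.sq_norm]; ring
  have e2 : ‖z - w‖ * ‖z + (starRingEnd ℂ) p‖
      * (‖z - w‖ * ‖z + (starRingEnd ℂ) p‖)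
      = Complex.normSq (z - w) * Complex.normSq (z + (starRingEnd ℂ) p) := by
    rw [← Complex.sq_norm, ← Complex.sq_norm]; ring
  rw [e1, e2] at hsq
  rw [normSq_add_conj z p, normSq_add_conj z w] at hsq ⊢
  have h4 : (4*z.re) * (w.re * Complex.normSq (z - p))
      ≤ (4*z.re) * (p.re * Complex.normSq (z - w)) := by nlinarith [hsq]
  have key := le_of_mul_le_mul_left h4 (by linarith : (0:ℝ) < 4*z.re)
  nlinarith [key]


lemma sin_lip (a b : ℝ) : |Real.sin a - Real.sin b| ≤ |a - b| := by
  rw [Real.sin_sub_sin]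
  have h1 : |Real.cos ((a+b)/2)| ≤ 1 := Real.abs_cos_le_one _
  have h2 : |Real.sin ((a-b)/2)| ≤ |(a-b)/2| := Real.abs_sin_le_abs
  rw [abs_mul, abs_mul]
  have e : |(a-b)/2| = |a-b|/2 := by rw [abs_div]; norm_num
  rw [e] at h2
  have h0 : (0:ℝ) ≤ |Real.sin ((a-b)/2)| := abs_nonneg _
  have h3 : |(2:ℝ)| = 2 := by norm_num
  rw [h3]
  nlinarith [abs_nonneg (a-b), abs_nonneg (Real.cos ((a+b)/2))]

lemma cos_lip (a b : ℝ) : |Real.cos a - Real.cos b| ≤ |a - b| := by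
  rw [Real.cos_sub_cos]
  have h1 : |Real.sin ((a+b)/2)| ≤ 1 := Real.abs_sin_le_one _
  have h2 : |Real.sin ((a-b)/2)| ≤ |(a-b)/2| := Real.abs_sin_le_abs
  rw [abs_mul, abs_mul]
  have e : |(a-b)/2| = |a-b|/2 := by rw [abs_div]; norm_num
  rw [e] at h2
  have h0 : (0:ℝ) ≤ |Real.sin ((a-b)/2)| := abs_nonneg _
  have : |(-2:ℝ)| = 2 := by norm_num
  rw [this]
  nlinarith [abs_nonneg (a-b)]

lemma re_mul_exp (z : ℂ) (β : ℝ) :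
    (z * Complex.exp (β * I)).re = z.re * Real.cos β - z.im * Real.sin β := by
  rw [Complex.mul_re, Complex.exp_ofReal_mul_I_re, Complex.exp_ofReal_mul_I_im]

lemma re_mul_exp_close (z : ℂ) (β θ' e : ℝ) (h : |β - θ'| ≤ e) :
    |(z * Complex.exp (β * I)).re - (z * Complex.exp (θ' * I)).re|
      ≤ 2 * ‖z‖ * e := by
  rw [re_mul_exp, re_mul_exp]
  have hre : |z.re| ≤ ‖z‖ := Complex.abs_re_le_norm z
  have him : |z.im| ≤ ‖z‖ := Complex.abs_im_le_norm z
  have hc : |Real.cos β - Real.cos θ'| ≤ e := le_trans (cos_lip β θ') h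
  have hs : |Real.sin β - Real.sin θ'| ≤ e := le_trans (sin_lip β θ') h
  have he : 0 ≤ e := le_trans (abs_nonneg _) h
  calc |z.re * Real.cos β - z.im * Real.sin β - (z.re * Real.cos θ' - z.im * Real.sin θ')|
      = |z.re * (Real.cos β - Real.cos θ') - z.im * (Real.sin β - Real.sin θ')| := by ring_nf
    _ ≤ |z.re * (Real.cos β - Real.cos θ')| + |z.im * (Real.sin β - Real.sin θ')| := abs_sub _ _
    _ ≤ ‖z‖ * e + ‖z‖ * e := by
        rw [abs_mul, abs_mul]
        have b1 : |z.re| * |Real.cos β - Real.cos θ'| ≤ ‖z‖ * e :=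
          mul_le_mul hre hc (abs_nonneg _) (norm_nonneg z)
        have b2 : |z.im| * |Real.sin β - Real.sin θ'| ≤ ‖z‖ * e :=
          mul_le_mul him hs (abs_nonneg _) (norm_nonneg z)
        linarith
    _ = 2 * ‖z‖ * e := by ring


lemma core_ineq (c ε r R s : ℝ) (hc1 : c ≤ 1) (hε0 : 0 ≤ ε) (hr : 0 < r) (hR : 0 ≤ R)
    (hs : s ≤ r)
    (key : (c - ε) * r * (r^2 + 2*(R*s - 2*R*r*ε) + R^2)
        ≤ R * (c + ε) * (r^2 + 2*(r*s + 2*r*r*ε) + r^2)) :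
    c * (R - r)^2 ≤ 16 * ε * (R + r)^2 := by
  have t1 : 0 ≤ ε*r*R*(r - s) :=
    mul_nonneg (mul_nonneg (mul_nonneg hε0 hr.le) hR) (by linarith)
  have t2 : 0 ≤ ε*r*(R*r)*(1 - c) :=
    mul_nonneg (mul_nonneg (mul_nonneg hε0 hr.le) (mul_nonneg hR hr.le)) (by linarith)
  have t3 : 0 ≤ ε*r*r^2 := by positivity
  have t4 : 0 ≤ ε*r*R^2 := by positivity
  have t5 : 0 ≤ ε*r*(R*r) := by positivity
  have big : c*r*(R - r)^2 ≤ 16*ε*r*(R + r)^2 := by nlinarith [key, t1, t2, t3, t4, t5]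
  have : r * (c * (R - r)^2) ≤ r * (16 * ε * (R + r)^2) := by linarith [big]
  exact le_of_mul_le_mul_left this hr

lemma lam_bound (c ε r R δ : ℝ) (hc : 0 < c) (hε0 : 0 ≤ ε) (hεc : ε ≤ c*δ^2/256)
    (hδ : 0 < δ) (hδ1 : δ ≤ 1) (hr : 0 < r) (hR : 0 ≤ R)
    (h : c * (R - r)^2 ≤ 16 * ε * (R + r)^2) :
    |R - r| ≤ δ * r := by
  have h2 : (R - r)^2 ≤ (δ/4)^2 * (R + r)^2 := by
    have : 16 * ε ≤ c * (δ/4)^2 := by nlinarith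
    have h3 : c * (R - r)^2 ≤ c * ((δ/4)^2 * (R+r)^2) := by nlinarith [sq_nonneg (R+r)]
    exact le_of_mul_le_mul_left h3 hc
  have habs : |R - r| ≤ (δ/4) * (R + r) := by
    have h4 : |R - r| = Real.sqrt ((R - r)^2) := (Real.sqrt_sq_eq_abs _).symm
    rw [h4]
    have h5 : ((δ/4) * (R+r))^2 = (δ/4)^2 * (R+r)^2 := by ring
    calc Real.sqrt ((R-r)^2) ≤ Real.sqrt (((δ/4)*(R+r))^2) := by
          apply Real.sqrt_le_sqrt; rw [h5]; exact h2
      _ = |(δ/4)*(R+r)| := Real.sqrt_sq_eq_abs _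
      _ = (δ/4)*(R+r) := abs_of_nonneg (by positivity)
  -- k = δ/4 ≤ 1/4 : derive R ≤ (1+3k) r then |R-r| ≤ δ r
  have hk : δ/4 ≤ 1/4 := by linarith
  have hRub : R ≤ r + (δ/4)*(R+r) := by
    have := (abs_le.mp habs).2; linarith
  have h6 : (1 - δ/4) * R ≤ (1 + δ/4) * r := by linarith
  have hR3 : R ≤ (1 + 3*(δ/4)) * r := by
    nlinarith [h6, mul_pos hr hδ, mul_nonneg hr.le (mul_nonneg hδ.le hδ.le), mul_nonneg hδ.le hR]
  have hsum : R + r ≤ 3 * r := by nlinarith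
  calc |R - r| ≤ (δ/4) * (R + r) := habs
    _ ≤ (δ/4) * (3*r) := by
        apply mul_le_mul_of_nonneg_left hsum (by positivity)
    _ ≤ δ * r := by nlinarith


lemma normSq_add_conj' (z w : ℂ) :
    Complex.normSq (z + (starRingEnd ℂ) w)
      = Complex.normSq z + 2 * (z * w).re + Complex.normSq w := by
  simp [Complex.normSq_apply, Complex.add_re, Complex.add_im,
    Complex.conj_re, Complex.conj_im, Complex.mul_re]
  ring

set_option maxHeartbeats 1000000 in
lemma projA (γ : ℝ → ℂ) (hc : ContinuousOn γ (Set.Ici 0))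
    (hin : ∀ t ≥ (0:ℝ), 0 < (γ t).re)
    (hland : Tendsto (fun t : ℝ => ‖γ t‖) atTop atTop)
    (θ : ℝ) (hθ : θ ∈ Set.Ioo (-(Real.pi/2)) (Real.pi/2))
    (hslope : Tendsto (fun t : ℝ => (γ t).arg) atTop (𝓝 θ))
    (δ : ℝ) (hδ : 0 < δ) (hδ1 : δ ≤ 1) :
    ∃ M : ℝ, 1 ≤ M ∧ ∀ z p : ℂ, 0 < z.re → M ≤ ‖z‖ → IsProjH γ z p →
      |p.arg - θ| ≤ δ ∧ |‖p‖ - ‖z‖| ≤ δ * ‖z‖ := by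
  set c : ℝ := Real.cos θ with hcdef
  have hc0 : 0 < c := Real.cos_pos_of_mem_Ioo hθ
  have hc1 : c ≤ 1 := Real.cos_le_one θ
  set ε : ℝ := min (c/2) (c*δ^2/256) with hεdef
  have hε0 : 0 < ε := lt_min (by positivity) (by positivity)
  have hεc2 : ε ≤ c/2 := min_le_left _ _
  have hεδ : ε ≤ δ := by
    have h1 : ε ≤ c*δ^2/256 := min_le_right _ _
    nlinarith
  -- T
  obtain ⟨T₀, hT₀⟩ := (Metric.tendsto_atTop.mp hslope) ε hε0
  set T : ℝ := max T₀ 0 with hTdef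
  have hT0 : 0 ≤ T := le_max_right _ _
  have hargT : ∀ t ≥ T, |(γ t).arg - θ| < ε := by
    intro t ht
    have := hT₀ t (le_trans (le_max_left _ _) ht)
    rwa [Real.dist_eq] at this
  -- bound on [0,T]
  obtain ⟨C, hC⟩ := (isCompact_Icc : IsCompact (Set.Icc (0:ℝ) T)).exists_bound_of_continuousOn
      (hc.mono (fun x hx => hx.1))
  set M₀ : ℝ := max C 0 with hM₀def
  have hM₀0 : 0 ≤ M₀ := le_max_right _ _
  have hM₀ : ∀ t ∈ Set.Icc (0:ℝ) T, ‖γ t‖ ≤ M₀ := by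
    intro t ht
    calc ‖γ t‖ = ‖γ t‖ := rfl
      _ ≤ C := hC t ht
      _ ≤ M₀ := le_max_left _ _
  refine ⟨max (max (2*M₀+2) (32*(M₀+1)/c)) 1, le_max_right _ _, ?_⟩
  intro z p hzre hzM hproj
  set r : ℝ := ‖z‖ with hrdef
  have hr1 : (1:ℝ) ≤ r := le_trans (le_max_right _ _) hzM
  have hr0 : (0:ℝ) < r := by linarith
  have hrM₀ : 2*M₀ + 2 ≤ r := le_trans (le_trans (le_max_left _ _) (le_max_left _ _)) hzM
  have hrM₀' : 32*(M₀+1)/c ≤ r := le_trans (le_trans (le_max_right _ _) (le_max_left _ _)) hzM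
  obtain ⟨⟨tp, htp0, hpt⟩, hmin⟩ := hproj
  have hpre : 0 < p.re := by rw [hpt]; exact hin tp htp0
  -- IVT comparison point
  obtain ⟨t₁, ht₁r, ht₁T⟩ : ∃ t₁, r < ‖γ t₁‖ ∧ T ≤ t₁ := by
    have h1 : ∀ᶠ t in atTop, r < ‖γ t‖ := hland.eventually_gt_atTop r
    have h2 : ∀ᶠ t : ℝ in atTop, T ≤ t := eventually_ge_atTop T
    exact (h1.and h2).exists
  have hsub : Set.Icc T t₁ ⊆ Set.Ici (0:ℝ) := fun x hx => le_trans hT0 hx.1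
  have habsc : ContinuousOn (fun t => ‖γ t‖) (Set.Icc T t₁) :=
    continuous_norm.comp_continuousOn (hc.mono hsub)
  have hmem : r ∈ Set.Icc (‖γ T‖) (‖γ t₁‖) := by
    constructor
    · exact (hM₀ T ⟨hT0, le_refl _⟩).trans (by linarith : M₀ ≤ r)
    · exact ht₁r.le
  obtain ⟨ts, hts, hfts⟩ := intermediate_value_Icc ht₁T habsc hmem
  set w : ℂ := γ ts with hwdef
  have hts0 : (0:ℝ) ≤ ts := le_trans hT0 hts.1
  have hwre : 0 < w.re := hin ts hts0
  have habsw : ‖w‖ = r := hfts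
  have hargw : |w.arg - θ| < ε := hargT ts hts.1
  -- projection inequality at ts
  have hd := hmin ts hts0
  have hρ := rho_le_of_dH_le (rhoH_lt_one hzre hpre) (rhoH_lt_one hzre hwre) hd
  have hu := u_comp hzre hpre hwre hρ
  have hw0 : w ≠ 0 := by
    intro h; rw [h] at habsw; simp at habsw; linarith
  have hwrecos : w.re = r * Real.cos w.arg := by
    have := Complex.cos_arg hw0
    rw [habsw] at this
    field_simp at this
    linarith [this]
  -- Step: abs p > M₀
  have hplarge : M₀ < ‖p‖ := by
    by_contra hle
    push_neg at hle
    have hDzp : (r - M₀)^2 ≤ Complex.normSq (z + (starRingEnd ℂ) p) := by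
      have tri : r - M₀ ≤ ‖z + (starRingEnd ℂ) p‖ := by
        have h1 : ‖z‖ - ‖-((starRingEnd ℂ) p)‖ ≤ ‖z - (-((starRingEnd ℂ) p))‖ :=
          norm_sub_norm_le _ _
        have h2 : ‖-((starRingEnd ℂ) p)‖ = ‖p‖ := by
          rw [norm_neg]; exact Complex.norm_conj p
        have h3 : z - (-((starRingEnd ℂ) p)) = z + (starRingEnd ℂ) p := by ring
        rw [h2, h3] at h1
        have h4 : (‖z‖:ℝ) = r := rfl
        have h5 : ‖z + (starRingEnd ℂ) p‖ = ‖z + (starRingEnd ℂ) p‖ := rfl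
        linarith
      have hnn : 0 ≤ r - M₀ := by linarith
      rw [Complex.normSq_eq_norm_sq]
      exact pow_le_pow_left₀ hnn tri 2
    have hDzw : Complex.normSq (z + (starRingEnd ℂ) w) ≤ (2*r)^2 := by
      have tri : ‖z + (starRingEnd ℂ) w‖ ≤ 2*r := by
        calc ‖z + (starRingEnd ℂ) w‖
            ≤ ‖z‖ + ‖(starRingEnd ℂ) w‖ := norm_add_le _ _
          _ = r + r := by rw [Complex.norm_conj, habsw]
          _ = 2*r := by ring
      rw [Complex.normSq_eq_norm_sq]
      exact pow_le_pow_left₀ (norm_nonneg _) tri 2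
    have hwrelb : r * (c/2) ≤ w.re := by
      rw [hwrecos]
      have h1 : |Real.cos w.arg - c| ≤ |w.arg - θ| := cos_lip _ _
      have h2 : c - ε ≤ Real.cos w.arg := by
        have := (abs_le.mp h1).1; linarith [hargw.le, abs_le.mp (le_of_lt hargw) |>.1]
      have : c/2 ≤ Real.cos w.arg := by linarith
      exact mul_le_mul_of_nonneg_left this hr0.le
    have hprub : p.re ≤ M₀ := le_trans (Complex.re_le_norm p) hle
    -- chain
    have chain : r * (c/2) * ((r - M₀)^2) ≤ M₀ * (2*r)^2 := by
      calc r * (c/2) * ((r - M₀)^2)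
          ≤ r * (c/2) * Complex.normSq (z + (starRingEnd ℂ) p) :=
            mul_le_mul_of_nonneg_left hDzp (by positivity)
        _ ≤ w.re * Complex.normSq (z + (starRingEnd ℂ) p) :=
            mul_le_mul_of_nonneg_right hwrelb (Complex.normSq_nonneg _)
        _ ≤ p.re * Complex.normSq (z + (starRingEnd ℂ) w) := hu
        _ ≤ M₀ * Complex.normSq (z + (starRingEnd ℂ) w) :=
            mul_le_mul_of_nonneg_right hprub (Complex.normSq_nonneg _)
        _ ≤ M₀ * (2*r)^2 := mul_le_mul_of_nonneg_left hDzw hM₀0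
    -- contradiction
    have hrc : 32*(M₀+1) ≤ c * r := by
      rw [div_le_iff₀ hc0] at hrM₀'
      linarith [hrM₀']
    have hhalf : r/2 ≤ r - M₀ := by linarith
    have hsq : (r/2)^2 ≤ (r-M₀)^2 := by nlinarith
    have chain2 : r*(c/2)*(r/2)^2 ≤ M₀ * (2*r)^2 :=
      le_trans (mul_le_mul_of_nonneg_left hsq (by positivity)) chain
    have hrr : (0:ℝ) < r^2 := by positivity
    have k1 := mul_le_mul_of_nonneg_right hrc hrr.le
    have k2 : c*r*r^2 ≤ 32*(M₀*r^2) := by nlinarith [chain2]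
    linarith [k1, k2, hrr]
  -- arg p close to θ
  have htpT : T < tp := by
    by_contra hle
    push_neg at hle
    have : ‖p‖ ≤ M₀ := by rw [hpt]; exact hM₀ tp ⟨htp0, hle⟩
    linarith
  have hargp : |p.arg - θ| < ε := by rw [hpt]; exact hargT tp htpT.le
  set R : ℝ := ‖p‖ with hRdef
  have hR0 : (0:ℝ) ≤ R := norm_nonneg p
  have hp0 : p ≠ 0 := by
    intro h
    have h2 : R = 0 := by rw [hRdef, h]; simp
    rw [h2] at hplarge
    exact absurd hplarge (not_lt.mpr hM₀0)
  set s : ℝ := (z * Complex.exp (θ * I)).re with hsdef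
  have hsabs : |s| ≤ r := by
    calc |s| ≤ ‖z * Complex.exp (θ*I)‖ := Complex.abs_re_le_norm _
      _ = r * 1 := by rw [norm_mul, Complex.norm_exp_ofReal_mul_I]
      _ = r := by ring
  have hpeq : p = (R:ℂ) * Complex.exp (p.arg * I) := (Complex.norm_mul_exp_arg_mul_I p).symm
  have hweq : w = (r:ℂ) * Complex.exp (w.arg * I) := by
    conv_lhs => rw [← Complex.norm_mul_exp_arg_mul_I w]
    rw [habsw]
  have hzp : (z*p).re = R * (z * Complex.exp (p.arg * I)).re := by
    conv_lhs => rw [hpeq]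
    rw [show z * ((R:ℂ) * Complex.exp (p.arg*I)) = (R:ℂ) * (z * Complex.exp (p.arg*I)) by ring]
    exact Complex.re_ofReal_mul _ _
  have hzw : (z*w).re = r * (z * Complex.exp (w.arg * I)).re := by
    conv_lhs => rw [hweq]
    rw [show z * ((r:ℂ) * Complex.exp (w.arg*I)) = (r:ℂ) * (z * Complex.exp (w.arg*I)) by ring]
    exact Complex.re_ofReal_mul _ _
  have hclosep : |(z * Complex.exp (p.arg*I)).re - s| ≤ 2*r*ε :=
    re_mul_exp_close z p.arg θ ε hargp.le
  have hclosew : |(z * Complex.exp (w.arg*I)).re - s| ≤ 2*r*ε :=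
    re_mul_exp_close z w.arg θ ε hargw.le
  have hDp : Complex.normSq (z + (starRingEnd ℂ) p) = r^2 + 2*(z*p).re + R^2 := by
    rw [normSq_add_conj', Complex.normSq_eq_norm_sq, Complex.normSq_eq_norm_sq]
  have hDw : Complex.normSq (z + (starRingEnd ℂ) w) = r^2 + 2*(z*w).re + r^2 := by
    rw [normSq_add_conj', Complex.normSq_eq_norm_sq, Complex.normSq_eq_norm_sq, habsw]
  have hRne : R ≠ 0 := by intro h; rw [h] at hplarge; exact absurd hplarge (not_lt.mpr hM₀0)
  have hprecos : p.re = R * Real.cos p.arg := by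
    have h1 := Complex.cos_arg hp0
    rw [← hRdef] at h1
    field_simp [hRne] at h1
    linarith [h1]
  have hcosp : Real.cos p.arg ≤ c + ε := by
    have h1 := (cos_lip p.arg θ).trans hargp.le
    linarith [(abs_le.mp h1).2]
  have hwlb : (c - ε) * r ≤ w.re := by
    rw [hwrecos]
    have h1 := (cos_lip w.arg θ).trans hargw.le
    have h2 : c - ε ≤ Real.cos w.arg := by linarith [(abs_le.mp h1).1]
    calc (c - ε) * r = r * (c - ε) := by ring
      _ ≤ r * Real.cos w.arg := mul_le_mul_of_nonneg_left h2 hr0.le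
  have hpub : p.re ≤ R * (c + ε) := by
    rw [hprecos]; exact mul_le_mul_of_nonneg_left hcosp hR0
  have hzplb : R*s - 2*R*r*ε ≤ (z*p).re := by
    have h1 : s - 2*r*ε ≤ (z * Complex.exp (p.arg*I)).re := by
      linarith [(abs_le.mp hclosep).1]
    calc R*s - 2*R*r*ε = R*(s - 2*r*ε) := by ring
      _ ≤ R*(z*Complex.exp (p.arg*I)).re := mul_le_mul_of_nonneg_left h1 hR0
      _ = (z*p).re := hzp.symm
  have hzwub : (z*w).re ≤ r*s + 2*r*r*ε := by
    have h1 : (z * Complex.exp (w.arg*I)).re ≤ s + 2*r*ε := by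
      linarith [(abs_le.mp hclosew).2]
    calc (z*w).re = r*(z*Complex.exp (w.arg*I)).re := hzw
      _ ≤ r*(s + 2*r*ε) := mul_le_mul_of_nonneg_left h1 hr0.le
      _ = r*s + 2*r*r*ε := by ring
  have hcε : 0 ≤ (c - ε) * r := by
    have : ε ≤ c := by linarith
    have : 0 ≤ c - ε := by linarith
    positivity
  have hDpnn : (0:ℝ) ≤ r^2 + 2*(z*p).re + R^2 := by
    rw [← hDp]; exact Complex.normSq_nonneg _
  have hUBnn : (0:ℝ) ≤ r^2 + 2*(r*s + 2*r*r*ε) + r^2 := by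
    have h1 : r*(-r) ≤ r*s := mul_le_mul_of_nonneg_left (abs_le.mp hsabs).1 hr0.le
    have h2 : (0:ℝ) ≤ r*r*ε := by positivity
    linarith [h1, h2]
  have key : (c - ε) * r * (r^2 + 2*(R*s - 2*R*r*ε) + R^2)
      ≤ R * (c + ε) * (r^2 + 2*(r*s + 2*r*r*ε) + r^2) := by
    calc (c - ε) * r * (r^2 + 2*(R*s - 2*R*r*ε) + R^2)
        ≤ (c - ε) * r * (r^2 + 2*(z*p).re + R^2) :=
          mul_le_mul_of_nonneg_left (by linarith) hcε
      _ ≤ w.re * (r^2 + 2*(z*p).re + R^2) :=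
          mul_le_mul_of_nonneg_right hwlb hDpnn
      _ = w.re * Complex.normSq (z + (starRingEnd ℂ) p) := by rw [hDp]
      _ ≤ p.re * Complex.normSq (z + (starRingEnd ℂ) w) := hu
      _ = p.re * (r^2 + 2*(z*w).re + r^2) := by rw [hDw]
      _ ≤ p.re * (r^2 + 2*(r*s + 2*r*r*ε) + r^2) :=
          mul_le_mul_of_nonneg_left (by linarith) hpre.le
      _ ≤ R * (c + ε) * (r^2 + 2*(r*s + 2*r*r*ε) + r^2) :=
          mul_le_mul_of_nonneg_right hpub hUBnn
  have hcore := core_ineq c ε r R s hc1 hε0.le hr0 hR0 (abs_le.mp hsabs).2 key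
  have hfin := lam_bound c ε r R δ hc0 hε0.le (min_le_right _ _) hδ hδ1 hr0 hR0 hcore
  exact ⟨le_trans hargp.le hεδ, hfin⟩

lemma exp_diff (β θ' δ : ℝ) (h : |β - θ'| ≤ δ) :
    ‖Complex.exp (β*I) - Complex.exp (θ'*I)‖ ≤ 2*δ := by
  have hre : (Complex.exp (β*I) - Complex.exp (θ'*I)).re = Real.cos β - Real.cos θ' := by
    simp [Complex.sub_re, Complex.exp_ofReal_mul_I_re]
  have him : (Complex.exp (β*I) - Complex.exp (θ'*I)).im = Real.sin β - Real.sin θ' := by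
    simp [Complex.sub_im, Complex.exp_ofReal_mul_I_im]
  calc ‖Complex.exp (β*I) - Complex.exp (θ'*I)‖
      ≤ |(Complex.exp (β*I) - Complex.exp (θ'*I)).re| +
        |(Complex.exp (β*I) - Complex.exp (θ'*I)).im| :=
        Complex.norm_le_abs_re_add_abs_im _
    _ = |Real.cos β - Real.cos θ'| + |Real.sin β - Real.sin θ'| := by rw [hre, him]
    _ ≤ |β - θ'| + |β - θ'| := add_le_add (cos_lip _ _) (sin_lip _ _)
    _ ≤ 2*δ := by linarith

lemma rho_small (θ c δ r : ℝ) (hcθ : c = Real.cos θ) (hc0 : 0 < c) (hr0 : 0 < r)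
    (hδ0 : 0 < δ) (hδc : δ ≤ c/2) (hδh : δ ≤ 1/2)
    (q₁ q₂ : ℂ)
    (h1a : |q₁.arg - θ| ≤ δ) (h1r : |‖q₁‖ - r| ≤ δ*r)
    (h2a : |q₂.arg - θ| ≤ δ) (h2r : |‖q₂‖ - r| ≤ δ*r) :
    rhoH q₁ q₂ ≤ 20*δ/c := by
  set R₁ : ℝ := ‖q₁‖ with hR₁
  set R₂ : ℝ := ‖q₂‖ with hR₂
  have hR₁l : r/2 ≤ R₁ := by
    have := (abs_le.mp h1r).1; nlinarith
  have hR₂l : r/2 ≤ R₂ := by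
    have := (abs_le.mp h2r).1; nlinarith
  have hR₁u : R₁ ≤ 2*r := by
    have := (abs_le.mp h1r).2; nlinarith
  have hR₂u : R₂ ≤ 2*r := by
    have := (abs_le.mp h2r).2; nlinarith
  have hq₁0 : q₁ ≠ 0 := by
    intro h; rw [hR₁] at hR₁l; rw [h] at hR₁l; simp at hR₁l; linarith
  have hq₂0 : q₂ ≠ 0 := by
    intro h; rw [hR₂] at hR₂l; rw [h] at hR₂l; simp at hR₂l; linarith
  -- numerator
  have hnum : ‖q₁ - q₂‖ ≤ 10*δ*r := by
    have hdec : q₁ - q₂ = (R₁:ℂ) * (Complex.exp (q₁.arg*I) - Complex.exp (θ*I))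
        + ((R₁:ℂ) - (R₂:ℂ)) * Complex.exp (θ*I)
        + (R₂:ℂ) * (Complex.exp (θ*I) - Complex.exp (q₂.arg*I)) := by
      have e1 : q₁ = (R₁:ℂ) * Complex.exp (q₁.arg*I) := (Complex.norm_mul_exp_arg_mul_I q₁).symm
      have e2 : q₂ = (R₂:ℂ) * Complex.exp (q₂.arg*I) := (Complex.norm_mul_exp_arg_mul_I q₂).symm
      calc q₁ - q₂ = (R₁:ℂ) * Complex.exp (q₁.arg*I) - (R₂:ℂ) * Complex.exp (q₂.arg*I) := by
            rw [← e1, ← e2]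
        _ = (R₁:ℂ) * (Complex.exp (q₁.arg*I) - Complex.exp (θ*I))
            + ((R₁:ℂ) - (R₂:ℂ)) * Complex.exp (θ*I)
            + (R₂:ℂ) * (Complex.exp (θ*I) - Complex.exp (q₂.arg*I)) := by ring
    have b1 : ‖(R₁:ℂ) * (Complex.exp (q₁.arg*I) - Complex.exp (θ*I))‖ ≤ 2*r*(2*δ) := by
      rw [norm_mul]
      have : ‖(R₁:ℂ)‖ = R₁ := by
        rw [Complex.norm_real]; exact abs_of_nonneg (by linarith)
      rw [this]
      exact mul_le_mul hR₁u (exp_diff _ _ _ h1a) (norm_nonneg _) (by linarith)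
    have b2 : ‖((R₁:ℂ) - (R₂:ℂ)) * Complex.exp (θ*I)‖ ≤ 2*(δ*r) := by
      rw [norm_mul, Complex.norm_exp_ofReal_mul_I, mul_one]
      have : ((R₁:ℂ) - (R₂:ℂ)) = ((R₁ - R₂ : ℝ) : ℂ) := by push_cast; ring
      rw [this, Complex.norm_real, Real.norm_eq_abs]
      have h3 : |R₁ - R₂| ≤ |R₁ - r| + |r - R₂| := abs_sub_le _ _ _
      have h4 : |r - R₂| = |R₂ - r| := abs_sub_comm _ _
      linarith [h1r, h2r, h3, h4.le, h4.ge]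
    have b3 : ‖(R₂:ℂ) * (Complex.exp (θ*I) - Complex.exp (q₂.arg*I))‖ ≤ 2*r*(2*δ) := by
      rw [norm_mul]
      have : ‖(R₂:ℂ)‖ = R₂ := by
        rw [Complex.norm_real]; exact abs_of_nonneg (by linarith)
      rw [this]
      have h5 : |θ - q₂.arg| ≤ δ := by rw [abs_sub_comm]; exact h2a
      exact mul_le_mul hR₂u (exp_diff _ _ _ h5) (norm_nonneg _) (by linarith)
    calc ‖q₁ - q₂‖
        ≤ ‖(R₁:ℂ) * (Complex.exp (q₁.arg*I) - Complex.exp (θ*I))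
            + ((R₁:ℂ) - (R₂:ℂ)) * Complex.exp (θ*I)‖
          + ‖(R₂:ℂ) * (Complex.exp (θ*I) - Complex.exp (q₂.arg*I))‖ := by
          rw [hdec]; exact norm_add_le _ _
      _ ≤ ‖(R₁:ℂ) * (Complex.exp (q₁.arg*I) - Complex.exp (θ*I))‖
          + ‖((R₁:ℂ) - (R₂:ℂ)) * Complex.exp (θ*I)‖
          + ‖(R₂:ℂ) * (Complex.exp (θ*I) - Complex.exp (q₂.arg*I))‖ := by
          gcongr
          exact norm_add_le _ _
      _ ≤ 2*r*(2*δ) + 2*(δ*r) + 2*r*(2*δ) := by linarith [b1, b2, b3]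
      _ = 10*δ*r := by ring
  -- denominator
  have hden : r*c/2 ≤ ‖q₁ + (starRingEnd ℂ) q₂‖ := by
    have hre1 : R₁ * Real.cos q₁.arg = q₁.re := by
      have h1 := Complex.cos_arg hq₁0
      rw [← hR₁] at h1
      have hR₁ne : R₁ ≠ 0 := by linarith
      field_simp [hR₁ne] at h1
      linarith [h1]
    have hre2 : R₂ * Real.cos q₂.arg = q₂.re := by
      have h1 := Complex.cos_arg hq₂0
      rw [← hR₂] at h1
      have hR₂ne : R₂ ≠ 0 := by linarith
      field_simp [hR₂ne] at h1
      linarith [h1]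
    have hc1 : c - δ ≤ Real.cos q₁.arg := by
      have h1 := (cos_lip q₁.arg θ).trans h1a
      rw [← hcθ] at h1
      linarith [(abs_le.mp h1).1]
    have hc2 : c - δ ≤ Real.cos q₂.arg := by
      have h1 := (cos_lip q₂.arg θ).trans h2a
      rw [← hcθ] at h1
      linarith [(abs_le.mp h1).1]
    have hcd : 0 ≤ c - δ := by linarith
    have hb1 : (r/2)*(c-δ) ≤ q₁.re := by
      rw [← hre1]
      calc (r/2)*(c-δ) ≤ R₁*(c-δ) := mul_le_mul_of_nonneg_right hR₁l hcd
        _ ≤ R₁ * Real.cos q₁.arg := mul_le_mul_of_nonneg_left hc1 (by linarith)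
    have hb2 : (r/2)*(c-δ) ≤ q₂.re := by
      rw [← hre2]
      calc (r/2)*(c-δ) ≤ R₂*(c-δ) := mul_le_mul_of_nonneg_right hR₂l hcd
        _ ≤ R₂ * Real.cos q₂.arg := mul_le_mul_of_nonneg_left hc2 (by linarith)
    have hresum : (q₁ + (starRingEnd ℂ) q₂).re = q₁.re + q₂.re := by
      simp [Complex.add_re, Complex.conj_re]
    have hq1 : (r/2)*(c/2) ≤ q₁.re :=
      le_trans (mul_le_mul_of_nonneg_left (by linarith : c/2 ≤ c - δ) (by linarith : (0:ℝ) ≤ r/2)) hb1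
    have hq2 : (r/2)*(c/2) ≤ q₂.re :=
      le_trans (mul_le_mul_of_nonneg_left (by linarith : c/2 ≤ c - δ) (by linarith : (0:ℝ) ≤ r/2)) hb2
    calc r*c/2 = (r/2)*(c/2) + (r/2)*(c/2) := by ring
      _ ≤ q₁.re + q₂.re := by linarith
      _ = (q₁ + (starRingEnd ℂ) q₂).re := hresum.symm
      _ ≤ ‖q₁ + (starRingEnd ℂ) q₂‖ := Complex.re_le_norm _
  have hdenpos : 0 < r*c/2 := by positivity
  rw [rhoH_eq]
  calc ‖q₁ - q₂‖ / ‖q₁ + (starRingEnd ℂ) q₂‖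
      ≤ (10*δ*r) / (r*c/2) := by
        apply div_le_div₀ (by positivity) hnum hdenpos hden
    _ = 20*δ/c := by field_simp; ring


/-- projections of a sequence tending to ∞ onto two curves landing
at ∞ with the same slope θ are asymptotically close. -/
theorem stmt4 (γ₁ γ₂ : ℝ → ℂ)
    (h1c : ContinuousOn γ₁ (Set.Ici 0)) (h2c : ContinuousOn γ₂ (Set.Ici 0))
    (h1in : ∀ t ≥ (0:ℝ), 0 < (γ₁ t).re) (h2in : ∀ t ≥ (0:ℝ), 0 < (γ₂ t).re)
    (h1land : Tendsto (fun t : ℝ => ‖γ₁ t‖) atTop atTop)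
    (h2land : Tendsto (fun t : ℝ => ‖γ₂ t‖) atTop atTop)
    (θ : ℝ) (hθ : θ ∈ Set.Ioo (-(Real.pi/2)) (Real.pi/2))
    (h1slope : Tendsto (fun t : ℝ => (γ₁ t).arg) atTop (𝓝 θ))
    (h2slope : Tendsto (fun t : ℝ => (γ₂ t).arg) atTop (𝓝 θ))
    (z : ℕ → ℂ) (hz : ∀ n, 0 < (z n).re)
    (hzinf : Tendsto (fun n : ℕ => ‖z n‖) atTop atTop)
    (p₁ p₂ : ℕ → ℂ)
    (hp₁ : ∀ n : ℕ, IsProjH γ₁ (z n) (p₁ n))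
    (hp₂ : ∀ n : ℕ, IsProjH γ₂ (z n) (p₂ n)) :
    Tendsto (fun n : ℕ => dH (p₁ n) (p₂ n)) atTop (𝓝 0) := by
  have hc0 : 0 < Real.cos θ := Real.cos_pos_of_mem_Ioo hθ
  have hρ0 : Tendsto (fun n : ℕ => rhoH (p₁ n) (p₂ n)) atTop (𝓝 0) := by
    rw [Metric.tendsto_atTop]
    intro η hη
    set c := Real.cos θ with hcθ
    set δ : ℝ := min (η * c/40) (min (c/2) (1/2)) with hδdef
    have hδ0 : 0 < δ := lt_min (by positivity) (lt_min (by positivity) (by norm_num))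
    have hδc : δ ≤ c/2 := le_trans (min_le_right _ _) (min_le_left _ _)
    have hδh : δ ≤ 1/2 := le_trans (min_le_right _ _) (min_le_right _ _)
    have hδ1 : δ ≤ 1 := by linarith
    obtain ⟨M₁, hM₁1, hM₁⟩ := projA γ₁ h1c h1in h1land θ hθ h1slope δ hδ0 hδ1
    obtain ⟨M₂, hM₂1, hM₂⟩ := projA γ₂ h2c h2in h2land θ hθ h2slope δ hδ0 hδ1
    obtain ⟨N, hN⟩ := Filter.eventually_atTop.mp (hzinf.eventually_ge_atTop (max M₁ M₂))
    refine ⟨N, fun n hn => ?_⟩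
    have hrn := hN n hn
    have A1 := hM₁ (z n) (p₁ n) (hz n) (le_trans (le_max_left _ _) hrn) (hp₁ n)
    have A2 := hM₂ (z n) (p₂ n) (hz n) (le_trans (le_max_right _ _) hrn) (hp₂ n)
    have hr0 : 0 < ‖z n‖ :=
      lt_of_lt_of_le (by linarith [le_max_left M₁ M₂] : (0:ℝ) < max M₁ M₂) hrn
    have hb := rho_small θ c δ (‖z n‖) hcθ hc0 hr0 hδ0 hδc hδh
      (p₁ n) (p₂ n) A1.1 A1.2 A2.1 A2.2
    rw [Real.dist_eq, sub_zero, _root_.abs_of_nonneg (rhoH_nonneg _ _)]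
    have hδa : δ ≤ η * c/40 := min_le_left _ _
    have hmono : 20*δ/c ≤ 20*(η*c/40)/c := by gcongr
    have he : 20*(η*c/40)/c = η/2 := by field_simp; ring
    calc rhoH (p₁ n) (p₂ n) ≤ 20*δ/c := hb
      _ ≤ η/2 := by rw [← he]; exact hmono
      _ < η := by linarith
  have hcont : ContinuousAt (fun x : ℝ => (1/2) * Real.log ((1+x)/(1-x))) 0 := by
    have h1 : ContinuousAt (fun x : ℝ => (1+x)/(1-x)) 0 :=
      ContinuousAt.div (by fun_prop) (by fun_prop) (by norm_num)
    have h3 : ContinuousAt (fun x : ℝ => Real.log ((1+x)/(1-x))) 0 := h1.log (by norm_num)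
    exact continuousAt_const.mul h3
  have hfin := hcont.tendsto.comp hρ0
  simp only [Function.comp_def] at hfin
  have h0 : (1/2 : ℝ) * Real.log ((1+(0:ℝ))/(1-0)) = 0 := by norm_num
  rw [h0] at hfin
  exact hfin
end

section
/- Let γ : [0,∞) → ℍ be a continuous curve landing at ∞ such that arg(γ(t)) → θ as t → ∞ for some θ ∈ (−π/2, π/2). Let {z_n} ⊂ ℍ be a sequence with |z_n| → ∞ and, for each n, let π_n be a projection of z_n onto γ. Then d_ℍ(|z_n|·e^{iθ}, π_n) → 0 as n → ∞; that is, the projections onto γ are asymptotically close to the radial projections |z_n|e^{iθ} onto the ray of argument θ. -/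
open Complex Filter Topology

set_option maxHeartbeats 1000000

noncomputable def tH (z w : ℂ) : ℝ := ‖z - w‖ / (2 * Real.sqrt (z.re * w.re))

lemma key_sq (z w : ℂ) :
    ‖z + (starRingEnd ℂ) w‖ ^ 2 = ‖z - w‖ ^ 2 + 4 * (z.re * w.re) := by
  rw [Complex.sq_norm, Complex.sq_norm]
  simp [Complex.normSq_apply]
  ring

lemma tH_nonneg (z w : ℂ) : 0 ≤ tH z w := by
  unfold tH; positivity

lemma dH_eq {z w : ℂ} (hz : 0 < z.re) (hw : 0 < w.re) : dH z w = Real.arsinh (tH z w) := by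
  have hP : (0:ℝ) < z.re * w.re := mul_pos hz hw
  set n := ‖z - w‖ with hn
  set s := ‖z + (starRingEnd ℂ) w‖ with hs
  have hs2 : s ^ 2 = n ^ 2 + 4 * (z.re * w.re) := key_sq z w
  have hsnn : 0 ≤ s := norm_nonneg _
  have hnn : 0 ≤ n := norm_nonneg _
  have hspos : 0 < s := by
    rcases hsnn.lt_or_eq with h | h
    · exact h
    · exfalso; rw [← h] at hs2; nlinarith
  have hns : n < s := by nlinarith
  have hrho : rhoH z w = n / s := by rw [rhoH, norm_div]
  have hsqP : (0:ℝ) < Real.sqrt (z.re * w.re) := Real.sqrt_pos.2 hP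
  have hsqP2 : (Real.sqrt (z.re * w.re)) ^ 2 = z.re * w.re := Real.sq_sqrt hP.le
  have htH : tH z w = n / (2 * Real.sqrt (z.re * w.re)) := rfl
  rw [dH, hrho, Real.arsinh, htH]
  have hds : n / s < 1 := (div_lt_one hspos).2 hns
  have h1 : (1 + n / s) / (1 - n / s) = (s + n) / (s - n) := by
    rw [div_eq_div_iff (by linarith) (by linarith)]
    field_simp
  have hD : (2 * Real.sqrt (z.re * w.re)) ^ 2 = 4 * (z.re * w.re) := by
    rw [mul_pow, hsqP2]; norm_num
  have e1 : Real.sqrt (1 + (n / (2 * Real.sqrt (z.re * w.re))) ^ 2)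
      = s / (2 * Real.sqrt (z.re * w.re)) := by
    rw [show (1 + (n / (2 * Real.sqrt (z.re * w.re))) ^ 2)
        = (s / (2 * Real.sqrt (z.re * w.re))) ^ 2 by
      rw [div_pow, div_pow, hD]
      field_simp
      linarith]
    exact Real.sqrt_sq (by positivity)
  rw [h1, e1]
  have e2 : n / (2 * Real.sqrt (z.re * w.re)) + s / (2 * Real.sqrt (z.re * w.re))
      = (n + s) / (2 * Real.sqrt (z.re * w.re)) := by ring
  rw [e2]
  have e3 : (s + n) / (s - n) = ((n + s) / (2 * Real.sqrt (z.re * w.re))) ^ 2 := by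
    rw [div_pow, div_eq_div_iff (by linarith) (by positivity), hD]
    nlinarith
  rw [e3, Real.log_pow]
  ring

lemma dH_nonneg {z w : ℂ} (hz : 0 < z.re) (hw : 0 < w.re) : 0 ≤ dH z w := by
  rw [dH_eq hz hw]; exact Real.arsinh_nonneg_iff.2 (tH_nonneg z w)

lemma tH_symm (z w : ℂ) : tH z w = tH w z := by
  unfold tH
  rw [norm_sub_rev, mul_comm z.re w.re]

lemma dH_symm {z w : ℂ} (hz : 0 < z.re) (hw : 0 < w.re) : dH z w = dH w z := by
  rw [dH_eq hz hw, dH_eq hw hz, tH_symm]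

lemma dH_half_dist {z w : ℂ} (hz : 0 < z.re) (hw : 0 < w.re) :
    dH z w = dist (UpperHalfPlane.mk (I * z) (by simpa using hz))
      (UpperHalfPlane.mk (I * w) (by simpa using hw)) / 2 := by
  rw [UpperHalfPlane.dist_eq, dH_eq hz hw]
  have h1 : dist ((UpperHalfPlane.mk (I * z) (by simpa using hz)) : ℂ)
      ((UpperHalfPlane.mk (I * w) (by simpa using hw)) : ℂ) = ‖z - w‖ := by
    rw [UpperHalfPlane.coe_mk, UpperHalfPlane.coe_mk, Complex.dist_eq, ← mul_sub, norm_mul,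
      Complex.norm_I, one_mul]
  have h2 : (UpperHalfPlane.mk (I * z) (by simpa using hz)).im = z.re := by
    simp [UpperHalfPlane.mk_im]
  have h3 : (UpperHalfPlane.mk (I * w) (by simpa using hw)).im = w.re := by
    simp [UpperHalfPlane.mk_im]
  rw [h1, h2, h3]
  rw [tH]
  ring

lemma dH_triangle {a b c : ℂ} (ha : 0 < a.re) (hb : 0 < b.re) (hc : 0 < c.re) :
    dH a c ≤ dH a b + dH b c := by
  rw [dH_half_dist ha hc, dH_half_dist ha hb, dH_half_dist hb hc]
  have := dist_triangle (UpperHalfPlane.mk (I * a) (by simpa using ha))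
    (UpperHalfPlane.mk (I * b) (by simpa using hb))
    (UpperHalfPlane.mk (I * c) (by simpa using hc))
  linarith



lemma ray_re (s θ : ℝ) : ((s:ℂ) * Complex.exp ((θ:ℂ) * I)).re = s * Real.cos θ := by
  simp [Complex.mul_re, Complex.exp_ofReal_mul_I_re, Complex.exp_ofReal_mul_I_im]

lemma ray_abs (s θ : ℝ) (hs : 0 ≤ s) :
    ‖(s:ℂ) * Complex.exp ((θ:ℂ) * I)‖ = s := by
  rw [norm_mul, Complex.norm_exp_ofReal_mul_I, mul_one, Complex.norm_real, Real.norm_eq_abs, _root_.abs_of_nonneg hs]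

lemma tH_sq {z w : ℂ} (hz : 0 < z.re) (hw : 0 < w.re) :
    tH z w ^ 2 = ‖z - w‖ ^ 2 / (4 * (z.re * w.re)) := by
  rw [tH, div_pow, mul_pow, Real.sq_sqrt (mul_pos hz hw).le]
  norm_num

lemma abs_sub_ray_sq (z : ℂ) (s θ : ℝ) :
    ‖z - (s:ℂ) * Complex.exp ((θ:ℂ) * I)‖ ^ 2
      = ‖z‖ ^ 2 - 2 * s * (z.re * Real.cos θ + z.im * Real.sin θ) + s ^ 2 := by
  rw [Complex.sq_norm, Complex.sq_norm]
  simp [Complex.normSq_apply, Complex.exp_ofReal_mul_I_re, Complex.exp_ofReal_mul_I_im,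
    Complex.mul_re, Complex.mul_im]
  linear_combination (s^2) * Real.sin_sq_add_cos_sq θ

lemma tH_ray_sq {z : ℂ} (hz : 0 < z.re) {θ : ℝ} (hC : 0 < Real.cos θ) {s : ℝ} (hs : 0 < s) :
    tH z ((s:ℂ) * Complex.exp ((θ:ℂ) * I)) ^ 2
      = tH z ((‖z‖ : ℂ) * Complex.exp ((θ:ℂ) * I)) ^ 2
        + (‖z‖ - s) ^ 2 / (4 * z.re * s * Real.cos θ) := by
  have hz0 : z ≠ 0 := by intro h; rw [h] at hz; simp at hz
  have hr : 0 < ‖z‖ := norm_pos_iff.mpr hz0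
  have h1 : 0 < ((s:ℂ) * Complex.exp ((θ:ℂ) * I)).re := by rw [ray_re]; positivity
  have h2 : 0 < ((‖z‖ : ℂ) * Complex.exp ((θ:ℂ) * I)).re := by
    rw [ray_re]; positivity
  rw [tH_sq hz h1, tH_sq hz h2, abs_sub_ray_sq, abs_sub_ray_sq, ray_re, ray_re]
  set r := ‖z‖
  set k := z.re * Real.cos θ + z.im * Real.sin θ
  field_simp
  ring

lemma tH_ray_ray_sq {r s θ : ℝ} (hr : 0 < r) (hs : 0 < s) (hC : 0 < Real.cos θ) :
    tH ((r:ℂ) * Complex.exp ((θ:ℂ) * I)) ((s:ℂ) * Complex.exp ((θ:ℂ) * I)) ^ 2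
      = (r - s) ^ 2 / (4 * r * s * Real.cos θ ^ 2) := by
  have h1 : 0 < ((r:ℂ) * Complex.exp ((θ:ℂ) * I)).re := by rw [ray_re]; positivity
  have h2 : 0 < ((s:ℂ) * Complex.exp ((θ:ℂ) * I)).re := by rw [ray_re]; positivity
  rw [tH_sq h1 h2, ray_re, ray_re]
  have : (r:ℂ) * Complex.exp ((θ:ℂ) * I) - (s:ℂ) * Complex.exp ((θ:ℂ) * I)
      = ((r - s : ℝ) : ℂ) * Complex.exp ((θ:ℂ) * I) := by push_cast; ring
  rw [this, norm_mul, Complex.norm_exp_ofReal_mul_I, mul_one, Complex.norm_real, Real.norm_eq_abs, _root_.sq_abs,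
    div_eq_div_iff (by positivity) (by positivity)]
  ring

lemma tH_arg {v : ℂ} (hv : 0 < v.re) {θ : ℝ} (hC : 0 < Real.cos θ) :
    tH v ((‖v‖ : ℂ) * Complex.exp ((θ:ℂ) * I))
      = ‖Complex.exp ((v.arg:ℂ) * I) - Complex.exp ((θ:ℂ) * I)‖
        / (2 * Real.sqrt (Real.cos v.arg * Real.cos θ)) := by
  have hv0 : v ≠ 0 := by intro h; rw [h] at hv; simp at hv
  have hr : 0 < ‖v‖ := norm_pos_iff.mpr hv0
  have hcos : Real.cos v.arg = v.re / ‖v‖ := Complex.cos_arg hv0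
  have hnum : ‖v - (‖v‖ : ℂ) * Complex.exp ((θ:ℂ) * I)‖
      = ‖v‖ * ‖Complex.exp ((v.arg:ℂ) * I) - Complex.exp ((θ:ℂ) * I)‖ := by
    have hv' : (‖v‖ : ℂ) * Complex.exp ((v.arg:ℂ) * I) = v :=
      Complex.norm_mul_exp_arg_mul_I v
    calc ‖v - (‖v‖ : ℂ) * Complex.exp ((θ:ℂ) * I)‖
        = ‖(‖v‖ : ℂ)
            * (Complex.exp ((v.arg:ℂ) * I) - Complex.exp ((θ:ℂ) * I))‖ := by
          rw [mul_sub, hv']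
      _ = ‖v‖ * ‖Complex.exp ((v.arg:ℂ) * I) - Complex.exp ((θ:ℂ) * I)‖ := by
          rw [norm_mul, Complex.norm_real, Real.norm_eq_abs, _root_.abs_of_nonneg (norm_nonneg v)]
  have hden : Real.sqrt (v.re * ((‖v‖ : ℂ) * Complex.exp ((θ:ℂ) * I)).re)
      = ‖v‖ * Real.sqrt (Real.cos v.arg * Real.cos θ) := by
    rw [ray_re]
    have : v.re * (‖v‖ * Real.cos θ)
        = ‖v‖ ^ 2 * (Real.cos v.arg * Real.cos θ) := by
      rw [hcos]; field_simp
    rw [this, Real.sqrt_mul (sq_nonneg _), Real.sqrt_sq hr.le]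
  rw [tH, hnum, hden]
  rw [mul_comm (2:ℝ) _, mul_assoc]
  rw [mul_div_mul_left _ _ (ne_of_gt hr)]
  ring_nf

lemma key_est {z p : ℂ} {θ ε : ℝ} (hz : 0 < z.re) (hpp : 0 < p.re)
    (hC : 0 < Real.cos θ) (hε : 0 < ε)
    (h : dH z ((‖p‖ : ℂ) * Complex.exp ((θ:ℂ) * I))
        ≤ dH z ((‖z‖ : ℂ) * Complex.exp ((θ:ℂ) * I)) + ε) :
    (‖z‖ - ‖p‖) ^ 2
      ≤ 8 * (3 * Real.sinh ε * Real.exp ε) * ‖z‖ * ‖p‖ := by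
  have hz0 : z ≠ 0 := by intro hh; rw [hh] at hz; simp at hz
  have hp0 : p ≠ 0 := by intro hh; rw [hh] at hpp; simp at hpp
  set r := ‖z‖ with hrdef
  set s := ‖p‖ with hsdef
  have hr : 0 < r := norm_pos_iff.mpr hz0
  have hs : 0 < s := norm_pos_iff.mpr hp0
  set x := z.re with hxdef
  set C := Real.cos θ with hCdef
  have hw1 : 0 < ((s:ℂ) * Complex.exp ((θ:ℂ) * I)).re := by rw [ray_re]; positivity
  have hw2 : 0 < ((r:ℂ) * Complex.exp ((θ:ℂ) * I)).re := by rw [ray_re]; positivity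
  rw [dH_eq hz hw1, dH_eq hz hw2] at h
  set tw := tH z ((s:ℂ) * Complex.exp ((θ:ℂ) * I)) with htw
  set tq := tH z ((r:ℂ) * Complex.exp ((θ:ℂ) * I)) with htq
  have htwnn : 0 ≤ tw := tH_nonneg _ _
  have htqnn : 0 ≤ tq := tH_nonneg _ _
  set σ := Real.sinh ε with hσ
  set c := Real.cosh ε with hc
  have hσp : 0 < σ := Real.sinh_pos_iff.2 hε
  have hcp : 0 < c := Real.cosh_pos ε
  have h2 : tw ≤ tq * c + Real.sqrt (1 + tq ^ 2) * σ := by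
    have h2' := Real.sinh_le_sinh.2 h
    rwa [Real.sinh_arsinh, Real.sinh_add, Real.sinh_arsinh, Real.cosh_arsinh] at h2'
  have h3 : Real.sqrt (1 + tq ^ 2) ≤ 1 + tq := by
    have h31 : (1 + tq ^ 2) ≤ (1 + tq) ^ 2 := by nlinarith
    calc Real.sqrt (1 + tq ^ 2) ≤ Real.sqrt ((1 + tq) ^ 2) := Real.sqrt_le_sqrt h31
      _ = 1 + tq := Real.sqrt_sq (by linarith)
  have h4 : tw ≤ tq * c + (1 + tq) * σ := by nlinarith
  have h5 : tw ^ 2 ≤ (tq * c + (1 + tq) * σ) ^ 2 := by nlinarith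
  have h6 : tw ^ 2 = tq ^ 2 + (r - s) ^ 2 / (4 * x * s * C) := tH_ray_sq hz hC hs
  have habs : ‖z - (r:ℂ) * Complex.exp ((θ:ℂ) * I)‖ ≤ 2 * r := by
    have h1 := norm_sub_le z ((r:ℂ) * Complex.exp ((θ:ℂ) * I))
    rw [ray_abs r θ hr.le] at h1
    linarith
  have h7 : tq ^ 2 ≤ r / (x * C) := by
    rw [htq, tH_sq hz hw2, ray_re]
    calc ‖z - (r:ℂ) * Complex.exp ((θ:ℂ) * I)‖ ^ 2 / (4 * (x * (r * C)))
        ≤ (2 * r) ^ 2 / (4 * (x * (r * C))) := by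
          gcongr
      _ = r / (x * C) := by field_simp; ring
  have hone : 1 ≤ r / (x * C) := by
    rw [le_div_iff₀ (by positivity), one_mul]
    have hxr : x ≤ r := Complex.re_le_norm z
    have hC1 : C ≤ 1 := Real.cos_le_one θ
    nlinarith
  have hcsq : c ^ 2 = σ ^ 2 + 1 := Real.cosh_sq ε
  have key : (r - s) ^ 2 / (4 * x * s * C) ≤ 6 * σ * (σ + c) * (r / (x * C)) := by
    have e2 : tw ^ 2 - tq ^ 2 ≤ (tq * c + (1 + tq) * σ) ^ 2 - tq ^ 2 := by linarith
    have hA : (tq ^ 2 + 1) * (3 * σ * (σ + c)) - ((tq * c + (1 + tq) * σ) ^ 2 - tq ^ 2)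
        = σ ^ 2 * ((tq - 1) ^ 2 + 1) + σ * c * ((tq - 1) ^ 2 + 2) := by
      linear_combination (-(tq ^ 2)) * hcsq
    have e3 : (tq * c + (1 + tq) * σ) ^ 2 - tq ^ 2 ≤ (tq ^ 2 + 1) * (3 * σ * (σ + c)) := by
      have hB : 0 ≤ σ ^ 2 * ((tq - 1) ^ 2 + 1) + σ * c * ((tq - 1) ^ 2 + 2) := by positivity
      linarith
    have e4 : (tq ^ 2 + 1) ≤ 2 * (r / (x * C)) := by linarith
    have e5 : (tq ^ 2 + 1) * (3 * σ * (σ + c)) ≤ (2 * (r / (x * C))) * (3 * σ * (σ + c)) :=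
      mul_le_mul_of_nonneg_right e4 (by positivity)
    have e6 : (r - s) ^ 2 / (4 * x * s * C) = tw ^ 2 - tq ^ 2 := by rw [h6]; ring
    rw [e6]
    calc tw ^ 2 - tq ^ 2 ≤ (tq ^ 2 + 1) * (3 * σ * (σ + c)) := by linarith
      _ ≤ (2 * (r / (x * C))) * (3 * σ * (σ + c)) := e5
      _ = 6 * σ * (σ + c) * (r / (x * C)) := by ring
  have hfin : (r - s) ^ 2 ≤ 6 * σ * (σ + c) * (r / (x * C)) * (4 * x * s * C) :=
    (div_le_iff₀ (by positivity)).1 key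
  calc (r - s) ^ 2 ≤ 6 * σ * (σ + c) * (r / (x * C)) * (4 * x * s * C) := hfin
    _ = 24 * σ * (σ + c) * r * s := by field_simp; ring
    _ = 8 * (3 * σ * Real.exp ε) * r * s := by rw [← Real.sinh_add_cosh ε]; ring

lemma tq_sq_le {z : ℂ} (hz : 0 < z.re) {θ : ℝ} (hC : 0 < Real.cos θ) :
    tH z ((‖z‖ : ℂ) * Complex.exp ((θ:ℂ) * I)) ^ 2
      ≤ ‖z‖ / (z.re * Real.cos θ) := by
  have hz0 : z ≠ 0 := by intro hh; rw [hh] at hz; simp at hz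
  have hr : 0 < ‖z‖ := norm_pos_iff.mpr hz0
  have hw2 : 0 < ((‖z‖ : ℂ) * Complex.exp ((θ:ℂ) * I)).re := by
    rw [ray_re]; positivity
  set r := ‖z‖
  have habs : ‖z - (r:ℂ) * Complex.exp ((θ:ℂ) * I)‖ ≤ 2 * r := by
    have h1 := norm_sub_le z ((r:ℂ) * Complex.exp ((θ:ℂ) * I))
    rw [ray_abs r θ hr.le] at h1
    linarith
  rw [tH_sq hz hw2, ray_re]
  calc ‖z - (r:ℂ) * Complex.exp ((θ:ℂ) * I)‖ ^ 2 / (4 * (z.re * (r * Real.cos θ)))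
      ≤ (2 * r) ^ 2 / (4 * (z.re * (r * Real.cos θ))) := by gcongr
    _ = r / (z.re * Real.cos θ) := by field_simp; ring

lemma one_le_rxC {z : ℂ} (hz : 0 < z.re) {θ : ℝ} (hC : 0 < Real.cos θ) :
    1 ≤ ‖z‖ / (z.re * Real.cos θ) := by
  rw [le_div_iff₀ (by positivity), one_mul]
  have hxr : z.re ≤ ‖z‖ := Complex.re_le_norm z
  have hC1 : Real.cos θ ≤ 1 := Real.cos_le_one θ
  nlinarith

lemma far_est {z k : ℂ} {θ ε₀ M : ℝ} (hz : 0 < z.re) (hk : 0 < k.re) (hC : 0 < Real.cos θ)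
    (hε₀ : 0 < ε₀) (hM : 1 ≤ M) (hkM : ‖k‖ ≤ M)
    (hr1 : 2 * M ≤ ‖z‖)
    (hr2 : 144 * Real.exp ε₀ ^ 2 * M / Real.cos θ < ‖z‖) :
    dH z ((‖z‖ : ℂ) * Complex.exp ((θ:ℂ) * I)) + ε₀ < dH z k := by
  have hz0 : z ≠ 0 := by intro hh; rw [hh] at hz; simp at hz
  have hr : 0 < ‖z‖ := norm_pos_iff.mpr hz0
  set r := ‖z‖ with hrdef
  set x := z.re with hxdef
  set C := Real.cos θ with hCdef
  have hw2 : 0 < ((r:ℂ) * Complex.exp ((θ:ℂ) * I)).re := by rw [ray_re]; positivity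
  rw [dH_eq hz hw2, dH_eq hz hk]
  set tq := tH z ((r:ℂ) * Complex.exp ((θ:ℂ) * I)) with htq
  set tk := tH z k with htk
  have htqnn : 0 ≤ tq := tH_nonneg _ _
  have htknn : 0 ≤ tk := tH_nonneg _ _
  set S := Real.sqrt (r / (x * C)) with hS
  have hS2 : S ^ 2 = r / (x * C) := Real.sq_sqrt (by positivity)
  have hS1 : 1 ≤ S := by
    rw [hS]
    exact Real.one_le_sqrt.2 (one_le_rxC hz hC)
  have htqS : tq ≤ S := by
    have h1 : tq ^ 2 ≤ S ^ 2 := by rw [hS2]; exact tq_sq_le hz hC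
    nlinarith
  -- upper bound for sinh (arsinh tq + ε₀)
  have hsinh : Real.sinh (Real.arsinh tq + ε₀) ≤ 3 * S * Real.exp ε₀ := by
    rw [Real.sinh_add, Real.sinh_arsinh, Real.cosh_arsinh]
    have hch : Real.cosh ε₀ ≤ Real.exp ε₀ := by
      rw [Real.cosh_eq]
      have := Real.exp_pos (-ε₀)
      have h2 : Real.exp (-ε₀) ≤ Real.exp ε₀ := Real.exp_le_exp.2 (by linarith)
      linarith
    have hsh : Real.sinh ε₀ ≤ Real.exp ε₀ := by
      rw [Real.sinh_eq]
      have := Real.exp_pos (-ε₀)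
      have h2 : Real.exp ε₀ ≤ Real.exp ε₀ := le_rfl
      linarith [Real.exp_pos ε₀]
    have hsq : Real.sqrt (1 + tq ^ 2) ≤ 1 + tq := by
      have h31 : (1 + tq ^ 2) ≤ (1 + tq) ^ 2 := by nlinarith
      calc Real.sqrt (1 + tq ^ 2) ≤ Real.sqrt ((1 + tq) ^ 2) := Real.sqrt_le_sqrt h31
        _ = 1 + tq := Real.sqrt_sq (by linarith)
    have hshp : 0 ≤ Real.sinh ε₀ := Real.sinh_nonneg_iff.2 hε₀.le
    have hchp : 0 < Real.cosh ε₀ := Real.cosh_pos ε₀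
    calc tq * Real.cosh ε₀ + Real.sqrt (1 + tq ^ 2) * Real.sinh ε₀
        ≤ S * Real.exp ε₀ + (1 + S) * Real.exp ε₀ := by
          have e1 : tq * Real.cosh ε₀ ≤ S * Real.exp ε₀ :=
            mul_le_mul htqS hch hchp.le (by nlinarith)
          have e2 : Real.sqrt (1 + tq ^ 2) * Real.sinh ε₀ ≤ (1 + S) * Real.exp ε₀ := by
            apply mul_le_mul _ hsh hshp (by nlinarith)
            calc Real.sqrt (1 + tq ^ 2) ≤ 1 + tq := hsq
              _ ≤ 1 + S := by linarith
          linarith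
      _ ≤ 3 * S * Real.exp ε₀ := by nlinarith [Real.exp_pos ε₀]
  -- lower bound for tk
  have hxM : 0 < x * M := by positivity
  have htklb : (r - M) / (2 * Real.sqrt (x * M)) ≤ tk := by
    rw [htk, tH]
    have hnum : r - M ≤ ‖z - k‖ := by
      have h1 := norm_sub_norm_le z k
      linarith
    have hden : Real.sqrt (x * k.re) ≤ Real.sqrt (x * M) := by
      apply Real.sqrt_le_sqrt
      have : k.re ≤ ‖k‖ := Complex.re_le_norm k
      nlinarith
    have hdenp : 0 < Real.sqrt (x * k.re) := Real.sqrt_pos.2 (by positivity)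
    gcongr
  -- core numeric inequality
  have hrMpos : 0 < r - M := by linarith
  have hCr : 144 * Real.exp ε₀ ^ 2 * M < r * C := by
    rw [div_lt_iff₀ hC] at hr2; linarith
  have hcore : (3 * S * Real.exp ε₀) ^ 2 < ((r - M) / (2 * Real.sqrt (x * M))) ^ 2 := by
    rw [mul_pow, mul_pow, hS2, div_pow, mul_pow, Real.sq_sqrt hxM.le]
    have hgoal : 9 * (r / (x * C)) * Real.exp ε₀ ^ 2 < (r - M) ^ 2 / (2 ^ 2 * (x * M)) := by
      have h1 : 0 ≤ (r / 2 - M) * (3 * r / 2 - M) * C :=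
        mul_nonneg (mul_nonneg (by linarith) (by linarith)) hC.le
      have h2 : 0 < r * (r * C - 144 * Real.exp ε₀ ^ 2 * M) := by
        apply mul_pos hr; linarith
      have hs1 : 36 * Real.exp ε₀ ^ 2 * r * M < (r - M) ^ 2 * C := by nlinarith [h1, h2]
      have hrw : 9 * (r / (x * C)) * Real.exp ε₀ ^ 2 = (9 * r * Real.exp ε₀ ^ 2) / (x * C) := by
        ring
      rw [hrw, div_lt_div_iff₀ (by positivity) (by positivity)]
      nlinarith [mul_lt_mul_of_pos_left hs1 hz]
    calc 3 ^ 2 * (r / (x * C)) * Real.exp ε₀ ^ 2 = 9 * (r / (x * C)) * Real.exp ε₀ ^ 2 := by ring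
      _ < (r - M) ^ 2 / (2 ^ 2 * (x * M)) := hgoal
  have hfar : 3 * S * Real.exp ε₀ < (r - M) / (2 * Real.sqrt (x * M)) := by
    have hb : 0 ≤ (r - M) / (2 * Real.sqrt (x * M)) := by positivity
    exact lt_of_pow_lt_pow_left₀ 2 hb hcore
  have hmain : Real.sinh (Real.arsinh tq + ε₀) < tk := by
    calc Real.sinh (Real.arsinh tq + ε₀) ≤ 3 * S * Real.exp ε₀ := hsinh
      _ < (r - M) / (2 * Real.sqrt (x * M)) := hfar
      _ ≤ tk := htklb
  calc Real.arsinh tq + ε₀ = Real.arsinh (Real.sinh (Real.arsinh tq + ε₀)) := by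
        rw [Real.arsinh_sinh]
    _ < Real.arsinh tk := Real.arsinh_lt_arsinh.2 hmain

noncomputable def Fθ (θ : ℝ) (α : ℝ) : ℝ :=
  Real.arsinh (‖Complex.exp ((α:ℂ) * I) - Complex.exp ((θ:ℂ) * I)‖
    / (2 * Real.sqrt (Real.cos α * Real.cos θ)))

lemma arg_control {θ : ℝ} (hC : 0 < Real.cos θ) :
    Tendsto (Fθ θ) (𝓝 θ) (𝓝 0) := by
  have hnum : Continuous (fun α : ℝ =>
      ‖Complex.exp ((α:ℂ) * I) - Complex.exp ((θ:ℂ) * I)‖) := by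
    apply continuous_norm.comp
    exact (Complex.continuous_exp.comp (by continuity)).sub continuous_const
  have hden : Continuous (fun α : ℝ => 2 * Real.sqrt (Real.cos α * Real.cos θ)) := by
    apply continuous_const.mul
    exact Real.continuous_sqrt.comp (Real.continuous_cos.mul continuous_const)
  have hdnz : 2 * Real.sqrt (Real.cos θ * Real.cos θ) ≠ 0 := by positivity
  have hct : ContinuousAt (Fθ θ) θ := by
    apply Real.continuous_arsinh.continuousAt.comp
    exact (hnum.continuousAt).div (hden.continuousAt) hdnz
  have h0 : Fθ θ θ = 0 := by simp [Fθ]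
  have := hct.tendsto
  rwa [h0] at this

/-- projections onto a curve landing at ∞ with slope θ are
asymptotically close to the radial projections |z_n|e^{iθ}. -/
theorem stmt7 (γ : ℝ → ℂ)
    (hγc : ContinuousOn γ (Set.Ici 0))
    (hγin : ∀ t ≥ (0:ℝ), 0 < (γ t).re)
    (hland : Tendsto (fun t : ℝ => ‖γ t‖) atTop atTop)
    (θ : ℝ) (hθ : θ ∈ Set.Ioo (-(Real.pi/2)) (Real.pi/2))
    (hslope : Tendsto (fun t : ℝ => (γ t).arg) atTop (𝓝 θ))
    (z : ℕ → ℂ) (hz : ∀ n, 0 < (z n).re)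
    (hzinf : Tendsto (fun n : ℕ => ‖z n‖) atTop atTop)
    (p : ℕ → ℂ) (hp : ∀ n : ℕ, IsProjH γ (z n) (p n)) :
    Tendsto (fun n : ℕ =>
      dH (((‖z n‖ : ℝ) : ℂ) * Complex.exp ((θ : ℂ) * I)) (p n)) atTop (𝓝 0) := by
  obtain ⟨hθ1, hθ2⟩ := hθ
  have hCθ : 0 < Real.cos θ := Real.cos_pos_of_mem_Ioo ⟨by linarith, hθ2⟩
  have hγ0 : ∀ t, 0 ≤ t → (γ t) ≠ 0 := by
    intro t ht h0
    have := hγin t ht; rw [h0] at this; simp at this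
  have hrayre : ∀ t, 0 ≤ t → 0 < ((‖γ t‖ : ℂ) * Complex.exp ((θ:ℂ) * I)).re := by
    intro t ht
    rw [ray_re]
    have := norm_pos_iff.mpr (hγ0 t ht)
    positivity
  have hcurve : Tendsto
      (fun t : ℝ => dH (γ t) ((‖γ t‖ : ℂ) * Complex.exp ((θ:ℂ) * I)))
      atTop (𝓝 0) := by
    have h2 : Tendsto (fun t => Fθ θ ((γ t).arg)) atTop (𝓝 0) := (arg_control hCθ).comp hslope
    apply h2.congr'
    filter_upwards [eventually_ge_atTop (0:ℝ)] with t ht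
    have hre := hγin t ht
    rw [dH_eq hre (hrayre t ht), tH_arg hre hCθ]
    rfl
  rw [Metric.tendsto_atTop]
  intro ε hε
  set G : ℝ → ℝ := fun e =>
    Real.arsinh (Real.sqrt (2 * (3 * Real.sinh (2*e) * Real.exp (2*e))) / Real.cos θ) + e
    with hGdef
  have hGcont : Continuous G := by
    apply Continuous.add _ continuous_id
    apply Real.continuous_arsinh.comp
    apply Continuous.div_const
    apply Real.continuous_sqrt.comp
    continuity
  have hG0 : G 0 = 0 := by simp [hGdef]
  obtain ⟨ε₀, hε₀pos, hGε⟩ : ∃ e : ℝ, 0 < e ∧ G e < ε := by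
    have ht := hGcont.continuousAt (x := 0)
    rw [ContinuousAt, hG0] at ht
    have hev : ∀ᶠ e in 𝓝 (0:ℝ), G e < ε := ht.eventually_lt_const hε
    obtain ⟨δ, hδ, hball⟩ := Metric.eventually_nhds_iff.1 hev
    refine ⟨δ/2, by linarith, hball ?_⟩
    rw [Real.dist_eq, sub_zero, abs_of_pos (by linarith)]
    linarith
  obtain ⟨T₁, hT₁⟩ := (Metric.tendsto_atTop.1 hcurve) ε₀ hε₀pos
  set T := max T₁ 0 with hT
  have hT0 : (0:ℝ) ≤ T := le_max_right _ _
  have hTprop : ∀ t, T ≤ t →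
      dH (γ t) ((‖γ t‖ : ℂ) * Complex.exp ((θ:ℂ) * I)) < ε₀ := by
    intro t ht
    have ht0 : (0:ℝ) ≤ t := le_trans hT0 ht
    have h1 := hT₁ t (le_trans (le_max_left _ _) ht)
    rwa [Real.dist_eq, sub_zero, _root_.abs_of_nonneg (dH_nonneg (hγin t ht0) (hrayre t ht0))] at h1
  have hKc : IsCompact (γ '' Set.Icc 0 T) :=
    isCompact_Icc.image_of_continuousOn (hγc.mono (fun u hu => hu.1))
  obtain ⟨M₀, hM₀⟩ := hKc.isBounded.exists_norm_le
  set M := max M₀ 1 with hM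
  have hM1 : (1:ℝ) ≤ M := le_max_right _ _
  have hMb : ∀ u ∈ Set.Icc (0:ℝ) T, ‖γ u‖ ≤ M := by
    intro u hu
    have := hM₀ (γ u) ⟨u, hu, rfl⟩
    exact le_trans this (le_max_left _ _)
  set R₀ := max (2*M) (max (144 * Real.exp ε₀ ^ 2 * M / Real.cos θ + 1) (‖γ T‖))
    with hR₀
  obtain ⟨N, hN⟩ := Filter.eventually_atTop.1 (Filter.tendsto_atTop.1 hzinf R₀)
  refine ⟨N, fun n hn => ?_⟩
  have hzr := hz n
  have hzn0 : z n ≠ 0 := by intro h; rw [h] at hzr; simp at hzr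
  set r := ‖z n‖ with hr
  have hrpos : 0 < r := norm_pos_iff.mpr hzn0
  have hrR : R₀ ≤ r := hN n hn
  have hr2M : 2*M ≤ r := le_trans (le_max_left _ _) hrR
  have hr144 : 144 * Real.exp ε₀ ^ 2 * M / Real.cos θ < r := by
    have h1 : 144 * Real.exp ε₀ ^ 2 * M / Real.cos θ + 1 ≤ R₀ :=
      le_trans (le_max_left _ _) (le_max_right _ _)
    linarith
  have hrT : ‖γ T‖ ≤ r :=
    le_trans (le_trans (le_max_right _ _) (le_max_right _ _)) hrR
  set q := (r:ℂ) * Complex.exp ((θ:ℂ) * I) with hq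
  have hqre : 0 < q.re := by rw [hq, ray_re]; positivity
  obtain ⟨⟨s', hs'0, hps'⟩, hmin⟩ := hp n
  have hppre : 0 < (p n).re := by rw [hps']; exact hγin s' hs'0
  have hpn0 : p n ≠ 0 := by intro h; rw [h] at hppre; simp at hppre
  set sp := ‖p n‖ with hsp
  have hsppos : 0 < sp := norm_pos_iff.mpr hpn0
  -- intermediate value: a point on the curve with modulus r, beyond T
  obtain ⟨t₂, ht₂r, ht₂T⟩ : ∃ t₂, r ≤ ‖γ t₂‖ ∧ T ≤ t₂ := by
    obtain ⟨t₂, h2, h3⟩ :=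
      ((Filter.tendsto_atTop.1 hland r).and (eventually_ge_atTop T)).exists
    exact ⟨t₂, h2, h3⟩
  have hcont2 : ContinuousOn (fun t => ‖γ t‖) (Set.Icc T t₂) :=
    continuous_norm.comp_continuousOn
      (hγc.mono (fun u hu => le_trans hT0 hu.1))
  obtain ⟨t₁, ht₁mem, ht₁r⟩ := intermediate_value_Icc ht₂T hcont2 ⟨hrT, ht₂r⟩
  have ht₁T : T ≤ t₁ := ht₁mem.1
  have ht₁0 : (0:ℝ) ≤ t₁ := le_trans hT0 ht₁T
  have hγt₁re := hγin t₁ ht₁0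
  have e1 : dH (z n) (p n) ≤ dH (z n) (γ t₁) := hmin t₁ ht₁0
  have e2 : dH (z n) (γ t₁) ≤ dH (z n) q + dH q (γ t₁) := dH_triangle hzr hqre hγt₁re
  have e3 : dH q (γ t₁) < ε₀ := by
    have h4 := hTprop t₁ ht₁T
    have ht₁r' : ‖γ t₁‖ = r := ht₁r
    rw [ht₁r'] at h4
    rw [dH_symm hqre hγt₁re]
    exact h4
  have chain1 : dH (z n) (p n) ≤ dH (z n) q + ε₀ := by linarith
  have hs'T : T < s' := by
    by_contra hle
    push_neg at hle
    have hpK : ‖p n‖ ≤ M := by rw [hps']; exact hMb s' ⟨hs'0, hle⟩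
    have hfar := far_est hzr hppre hCθ hε₀pos hM1 hpK hr2M hr144
    rw [← hr, ← hq] at hfar
    linarith
  set w := ((sp:ℂ) * Complex.exp ((θ:ℂ) * I)) with hw
  have hwre : 0 < w.re := by rw [hw, ray_re]; positivity
  have e4 : dH (p n) w < ε₀ := by
    have h5 := hTprop s' (le_of_lt hs'T)
    rw [← hps'] at h5
    rw [hw, hsp]
    exact h5
  have chain2 : dH (z n) w ≤ dH (z n) q + 2*ε₀ := by
    have t1 : dH (z n) w ≤ dH (z n) (p n) + dH (p n) w := dH_triangle hzr hppre hwre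
    linarith
  have hkey : (r - sp) ^ 2 ≤ 8 * (3 * Real.sinh (2*ε₀) * Real.exp (2*ε₀)) * r * sp := by
    have := key_est (θ := θ) hzr hppre hCθ (by linarith : (0:ℝ) < 2*ε₀) (by
      rw [← hsp, ← hr, ← hq]
      exact chain2)
    rw [← hsp, ← hr] at this
    exact this
  set E := 3 * Real.sinh (2*ε₀) * Real.exp (2*ε₀) with hE
  have hEpos : 0 < E := by
    have h1 : 0 < Real.sinh (2*ε₀) := Real.sinh_pos_iff.2 (by linarith)
    have h2 : 0 < Real.exp (2*ε₀) := Real.exp_pos _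
    rw [hE]; positivity
  have h6 : tH q w ^ 2 ≤ 2 * E / Real.cos θ ^ 2 := by
    have h7 := tH_ray_ray_sq hrpos hsppos hCθ
    rw [← hq, ← hw] at h7
    rw [h7]
    calc (r - sp)^2/(4*r*sp*Real.cos θ^2) ≤ (8*E*r*sp)/(4*r*sp*Real.cos θ^2) := by gcongr
      _ = 2*E/Real.cos θ^2 := by field_simp; ring
  have h8 : tH q w ≤ Real.sqrt (2*E) / Real.cos θ := by
    rw [show tH q w = Real.sqrt (tH q w ^ 2) from (Real.sqrt_sq (tH_nonneg _ _)).symm]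
    calc Real.sqrt (tH q w^2) ≤ Real.sqrt (2*E/Real.cos θ^2) := Real.sqrt_le_sqrt h6
      _ = Real.sqrt (2*E)/Real.cos θ := by
          rw [Real.sqrt_div (by positivity), Real.sqrt_sq hCθ.le]
  have h10 : dH q w ≤ Real.arsinh (Real.sqrt (2*E)/Real.cos θ) := by
    rw [dH_eq hqre hwre]
    exact Real.arsinh_le_arsinh.2 h8
  have h11 : dH q (p n) ≤ dH q w + dH w (p n) := dH_triangle hqre hwre hppre
  have h12 : dH w (p n) = dH (p n) w := dH_symm hwre hppre
  have hGval : G ε₀ = Real.arsinh (Real.sqrt (2*E)/Real.cos θ) + ε₀ := by rw [hGdef, hE]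
  have hfinal : dH q (p n) < ε := by
    have h13 : dH q (p n) ≤ Real.arsinh (Real.sqrt (2*E)/Real.cos θ) + ε₀ := by linarith
    rw [hGval] at hGε
    linarith
  rw [Real.dist_eq, sub_zero, _root_.abs_of_nonneg (dH_nonneg hqre hppre)]
  exact hfinal
end
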